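/- For the A(t) quantum random walk with 0 < t < 1/√3 and t ≠ 1/2, the polynomial H = 2(x−1)(x+1)(y²+1)z²t² − (−y−x+xy²+z²y−x²y+z²xy²−z²x+z²x²y)zt + (yz²−x)(xz²+y) has nonvanishing gradient at every point of the unit torus T₃ where H vanishes; hence 𝒱₁ is smooth. -/

import Mathlib

/-- The denominator polynomial of the A(t) quantum random walk (denominators cleared). -/
noncomputable def HA (t : ℝ) (x y z : ℂ) : ℂ :=
  2 * (x - 1) * (x + 1) * (y ^ 2 + 1) * z ^ 2 * (t : ℂ) ^ 2 -
    (-y - x + x * y ^ 2 + z ^ 2 * y - x ^ 2 * y + z ^ 2 * x * y ^ 2 - z ^ 2 * x +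
        z ^ 2 * x ^ 2 * y) * z * (t : ℂ) +
    (y * z ^ 2 - x) * (x * z ^ 2 + y)

set_option maxHeartbeats 4000000 in
/-- for 0 < t < 1/√3 with t ≠ 1/2, the gradient of the A(t) denominator H
does not vanish at any point of the unit torus T₃ where H vanishes. -/
theorem At_variety_smooth_on_torus (t : ℝ) (ht0 : 0 < t) (ht1 : t < 1 / Real.sqrt 3)
    (ht2 : t ≠ 1 / 2)
    (x y z : ℂ) (hx : ‖x‖ = 1) (hy : ‖y‖ = 1) (hz : ‖z‖ = 1)
    (hH : HA t x y z = 0) :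
    ¬ (deriv (fun w => HA t w y z) x = 0 ∧ deriv (fun w => HA t x w z) y = 0 ∧
        deriv (fun w => HA t x y w) z = 0) := by
  rintro ⟨h1, h2, h3⟩
  unfold HA at hH
  -- nonvanishing
  have hx0 : x ≠ 0 := fun h => by simp [h] at hx
  have hy0 : y ≠ 0 := fun h => by simp [h] at hy
  have hz0 : z ≠ 0 := fun h => by simp [h] at hz
  have htC : (t:ℂ) ≠ 0 := by exact_mod_cast ne_of_gt ht0
  -- torus relations
  have hu : x * (starRingEnd ℂ) x = 1 := by
    rw [Complex.mul_conj, Complex.normSq_eq_norm_sq, hx]; norm_num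
  have hv : y * (starRingEnd ℂ) y = 1 := by
    rw [Complex.mul_conj, Complex.normSq_eq_norm_sq, hy]; norm_num
  have hw : z * (starRingEnd ℂ) z = 1 := by
    rw [Complex.mul_conj, Complex.normSq_eq_norm_sq, hz]; norm_num
  -- derivative in x
  have d1 := (((hasDerivAt_pow 2 x).const_mul ((-1:ℂ)*z^2 + (1:ℂ)*(t:ℂ)*y*z + (-1:ℂ)*(t:ℂ)*y*z^3 + (2:ℂ)*(t:ℂ)^2*z^2 + (2:ℂ)*(t:ℂ)^2*y^2*z^2)).add
      ((hasDerivAt_pow 1 x).const_mul ((-1:ℂ)*y + (1:ℂ)*y*z^4 + (1:ℂ)*(t:ℂ)*z + (1:ℂ)*(t:ℂ)*z^3 + (-1:ℂ)*(t:ℂ)*y^2*z + (-1:ℂ)*(t:ℂ)*y^2*z^3))).add_const ((1:ℂ)*y^2*z^2 + (1:ℂ)*(t:ℂ)*y*z + (-1:ℂ)*(t:ℂ)*y*z^3 + (-2:ℂ)*(t:ℂ)^2*z^2 + (-2:ℂ)*(t:ℂ)^2*y^2*z^2)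
  have hfun1 : (fun w : ℂ => HA t w y z)
      = (fun w : ℂ => ((-1:ℂ)*z^2 + (1:ℂ)*(t:ℂ)*y*z + (-1:ℂ)*(t:ℂ)*y*z^3 + (2:ℂ)*(t:ℂ)^2*z^2 + (2:ℂ)*(t:ℂ)^2*y^2*z^2)*w^2 + ((-1:ℂ)*y + (1:ℂ)*y*z^4 + (1:ℂ)*(t:ℂ)*z + (1:ℂ)*(t:ℂ)*z^3 + (-1:ℂ)*(t:ℂ)*y^2*z + (-1:ℂ)*(t:ℂ)*y^2*z^3)*w^1 + ((1:ℂ)*y^2*z^2 + (1:ℂ)*(t:ℂ)*y*z + (-1:ℂ)*(t:ℂ)*y*z^3 + (-2:ℂ)*(t:ℂ)^2*z^2 + (-2:ℂ)*(t:ℂ)^2*y^2*z^2)) := by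
    funext w; unfold HA; ring
  rw [hfun1] at h1
  have e1 := d1.deriv.symm.trans h1
  -- derivative in y
  have d2 := (((hasDerivAt_pow 2 y).const_mul ((1:ℂ)*z^2 + (-1:ℂ)*(t:ℂ)*x*z + (-1:ℂ)*(t:ℂ)*x*z^3 + (-2:ℂ)*(t:ℂ)^2*z^2 + (2:ℂ)*(t:ℂ)^2*x^2*z^2)).add
      ((hasDerivAt_pow 1 y).const_mul ((-1:ℂ)*x + (1:ℂ)*x*z^4 + (1:ℂ)*(t:ℂ)*z + (-1:ℂ)*(t:ℂ)*z^3 + (1:ℂ)*(t:ℂ)*x^2*z + (-1:ℂ)*(t:ℂ)*x^2*z^3))).add_const ((-1:ℂ)*x^2*z^2 + (1:ℂ)*(t:ℂ)*x*z + (1:ℂ)*(t:ℂ)*x*z^3 + (-2:ℂ)*(t:ℂ)^2*z^2 + (2:ℂ)*(t:ℂ)^2*x^2*z^2)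
  have hfun2 : (fun w : ℂ => HA t x w z)
      = (fun w : ℂ => ((1:ℂ)*z^2 + (-1:ℂ)*(t:ℂ)*x*z + (-1:ℂ)*(t:ℂ)*x*z^3 + (-2:ℂ)*(t:ℂ)^2*z^2 + (2:ℂ)*(t:ℂ)^2*x^2*z^2)*w^2 + ((-1:ℂ)*x + (1:ℂ)*x*z^4 + (1:ℂ)*(t:ℂ)*z + (-1:ℂ)*(t:ℂ)*z^3 + (1:ℂ)*(t:ℂ)*x^2*z + (-1:ℂ)*(t:ℂ)*x^2*z^3)*w^1 + ((-1:ℂ)*x^2*z^2 + (1:ℂ)*(t:ℂ)*x*z + (1:ℂ)*(t:ℂ)*x*z^3 + (-2:ℂ)*(t:ℂ)^2*z^2 + (2:ℂ)*(t:ℂ)^2*x^2*z^2)) := by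
    funext w; unfold HA; ring
  rw [hfun2] at h2
  have e2 := d2.deriv.symm.trans h2
  -- derivative in z
  have d3 := (((((hasDerivAt_pow 4 z).const_mul ((1:ℂ)*x*y)).add
      ((hasDerivAt_pow 3 z).const_mul ((-1:ℂ)*(t:ℂ)*y + (1:ℂ)*(t:ℂ)*x + (-1:ℂ)*(t:ℂ)*x*y^2 + (-1:ℂ)*(t:ℂ)*x^2*y))).add
      ((hasDerivAt_pow 2 z).const_mul ((1:ℂ)*y^2 + (-1:ℂ)*x^2 + (-2:ℂ)*(t:ℂ)^2 + (-2:ℂ)*(t:ℂ)^2*y^2 + (2:ℂ)*(t:ℂ)^2*x^2 + (2:ℂ)*(t:ℂ)^2*x^2*y^2))).add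
      ((hasDerivAt_pow 1 z).const_mul ((1:ℂ)*(t:ℂ)*y + (1:ℂ)*(t:ℂ)*x + (-1:ℂ)*(t:ℂ)*x*y^2 + (1:ℂ)*(t:ℂ)*x^2*y))).add_const ((-1:ℂ)*x*y)
  have hfun3 : (fun w : ℂ => HA t x y w)
      = (fun w : ℂ => ((1:ℂ)*x*y)*w^4 + ((-1:ℂ)*(t:ℂ)*y + (1:ℂ)*(t:ℂ)*x + (-1:ℂ)*(t:ℂ)*x*y^2 + (-1:ℂ)*(t:ℂ)*x^2*y)*w^3 + ((1:ℂ)*y^2 + (-1:ℂ)*x^2 + (-2:ℂ)*(t:ℂ)^2 + (-2:ℂ)*(t:ℂ)^2*y^2 + (2:ℂ)*(t:ℂ)^2*x^2 + (2:ℂ)*(t:ℂ)^2*x^2*y^2)*w^2 + ((1:ℂ)*(t:ℂ)*y + (1:ℂ)*(t:ℂ)*x + (-1:ℂ)*(t:ℂ)*x*y^2 + (1:ℂ)*(t:ℂ)*x^2*y)*w^1 + ((-1:ℂ)*x*y)) := by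
    funext w; unfold HA; ring
  rw [hfun3] at h3
  have e3 := d3.deriv.symm.trans h3
  have f1 : ((-1:ℂ)*((starRingEnd ℂ) y) + (1:ℂ)*((starRingEnd ℂ) y)*((starRingEnd ℂ) z)^4 + (-2:ℂ)*((starRingEnd ℂ) x)*((starRingEnd ℂ) z)^2 + (1:ℂ)*(t:ℂ)*((starRingEnd ℂ) z) + (1:ℂ)*(t:ℂ)*((starRingEnd ℂ) z)^3 + (-1:ℂ)*(t:ℂ)*((starRingEnd ℂ) y)^2*((starRingEnd ℂ) z) + (-1:ℂ)*(t:ℂ)*((starRingEnd ℂ) y)^2*((starRingEnd ℂ) z)^3 + (2:ℂ)*(t:ℂ)*((starRingEnd ℂ) x)*((starRingEnd ℂ) y)*((starRingEnd ℂ) z) + (-2:ℂ)*(t:ℂ)*((starRingEnd ℂ) x)*((starRingEnd ℂ) y)*((starRingEnd ℂ) z)^3 + (4:ℂ)*(t:ℂ)^2*((starRingEnd ℂ) x)*((starRingEnd ℂ) z)^2 + (4:ℂ)*(t:ℂ)^2*((starRingEnd ℂ) x)*((starRingEnd ℂ) y)^2*((starRingEnd ℂ) z)^2) = 0 := by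
    have h := congrArg (starRingEnd ℂ) e1
    simp only [map_add, map_sub, map_mul, map_pow, map_neg, map_zero, map_one, map_ofNat,
      map_natCast, Complex.conj_ofReal] at h
    linear_combination h
  have f2 : ((2:ℂ)*((starRingEnd ℂ) y)*((starRingEnd ℂ) z)^2 + (-1:ℂ)*((starRingEnd ℂ) x) + (1:ℂ)*((starRingEnd ℂ) x)*((starRingEnd ℂ) z)^4 + (1:ℂ)*(t:ℂ)*((starRingEnd ℂ) z) + (-1:ℂ)*(t:ℂ)*((starRingEnd ℂ) z)^3 + (-2:ℂ)*(t:ℂ)*((starRingEnd ℂ) x)*((starRingEnd ℂ) y)*((starRingEnd ℂ) z) + (-2:ℂ)*(t:ℂ)*((starRingEnd ℂ) x)*((starRingEnd ℂ) y)*((starRingEnd ℂ) z)^3 + (1:ℂ)*(t:ℂ)*((starRingEnd ℂ) x)^2*((starRingEnd ℂ) z) + (-1:ℂ)*(t:ℂ)*((starRingEnd ℂ) x)^2*((starRingEnd ℂ) z)^3 + (-4:ℂ)*(t:ℂ)^2*((starRingEnd ℂ) y)*((starRingEnd ℂ) z)^2 + (4:ℂ)*(t:ℂ)^2*((starRingEnd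 ℂ) x)^2*((starRingEnd ℂ) y)*((starRingEnd ℂ) z)^2) = 0 := by
    have h := congrArg (starRingEnd ℂ) e2
    simp only [map_add, map_sub, map_mul, map_pow, map_neg, map_zero, map_one, map_ofNat,
      map_natCast, Complex.conj_ofReal] at h
    linear_combination h
  have f3 : ((2:ℂ)*((starRingEnd ℂ) y)^2*((starRingEnd ℂ) z) + (4:ℂ)*((starRingEnd ℂ) x)*((starRingEnd ℂ) y)*((starRingEnd ℂ) z)^3 + (-2:ℂ)*((starRingEnd ℂ) x)^2*((starRingEnd ℂ) z) + (1:ℂ)*(t:ℂ)*((starRingEnd ℂ) y) + (-3:ℂ)*(t:ℂ)*((starRingEnd ℂ) y)*((starRingEnd ℂ) z)^2 + (1:ℂ)*(t:ℂ)*((starRingEnd ℂ) x) + (3:ℂ)*(t:ℂ)*((starRingEnd ℂ) x)*((starRingEnd ℂ) z)^2 + (-1:ℂ)*(t:ℂ)*((starRingEnd ℂ) x)*((starRingEnd ℂ) y)^2 + (-3:ℂ)*(t:ℂ)*((starRingEnd ℂ) x)*((starRingEnd ℂ) y)^2*((starRingEnd ℂ) z)^2 + (1:ℂ)*(t:ℂ)*((starRingEnd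 ℂ) x)^2*((starRingEnd ℂ) y) + (-3:ℂ)*(t:ℂ)*((starRingEnd ℂ) x)^2*((starRingEnd ℂ) y)*((starRingEnd ℂ) z)^2 + (-4:ℂ)*(t:ℂ)^2*((starRingEnd ℂ) z) + (-4:ℂ)*(t:ℂ)^2*((starRingEnd ℂ) y)^2*((starRingEnd ℂ) z) + (4:ℂ)*(t:ℂ)^2*((starRingEnd ℂ) x)^2*((starRingEnd ℂ) z) + (4:ℂ)*(t:ℂ)^2*((starRingEnd ℂ) x)^2*((starRingEnd ℂ) y)^2*((starRingEnd ℂ) z)) = 0 := by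
    have h := congrArg (starRingEnd ℂ) e3
    simp only [map_add, map_sub, map_mul, map_pow, map_neg, map_zero, map_one, map_ofNat,
      map_natCast, Complex.conj_ofReal] at h
    linear_combination h
  have F1 : ((-2:ℂ)*y^2*z^2 + (1:ℂ)*x*y + (-1:ℂ)*x*y*z^4 + (-2:ℂ)*(t:ℂ)*y*z + (2:ℂ)*(t:ℂ)*y*z^3 + (-1:ℂ)*(t:ℂ)*x*z + (-1:ℂ)*(t:ℂ)*x*z^3 + (1:ℂ)*(t:ℂ)*x*y^2*z + (1:ℂ)*(t:ℂ)*x*y^2*z^3 + (4:ℂ)*(t:ℂ)^2*z^2 + (4:ℂ)*(t:ℂ)^2*y^2*z^2) = 0 := by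
    linear_combination (x*y^2*z^4) * f1 + ((2:ℂ)*y^2*z^4*((starRingEnd ℂ) z)^2 + (-2:ℂ)*(t:ℂ)*y^2*z^4*((starRingEnd ℂ) y)*((starRingEnd ℂ) z) + (2:ℂ)*(t:ℂ)*y^2*z^4*((starRingEnd ℂ) y)*((starRingEnd ℂ) z)^3 + (-4:ℂ)*(t:ℂ)^2*y^2*z^4*((starRingEnd ℂ) z)^2 + (-4:ℂ)*(t:ℂ)^2*y^2*z^4*((starRingEnd ℂ) y)^2*((starRingEnd ℂ) z)^2) * hu + ((1:ℂ)*x*y*z^4 + (-1:ℂ)*x*y*z^4*((starRingEnd ℂ) z)^4 + (-2:ℂ)*(t:ℂ)*y*z^4*((starRingEnd ℂ) z) + (2:ℂ)*(t:ℂ)*y*z^4*((starRingEnd ℂ) z)^3 + (1:ℂ)*(t:ℂ)*x*z^4*((starRingEnd ℂ) z) + (1:ℂ)*(t:ℂ)*x*z^4*((starRingEnd ℂ) z)^3 + (1:ℂ)*(t:ℂ)*x*y*z^4*((starRingEnd ℂ) y)*((starRingEnd ℂ) z) + (1:ℂ)*(t:ℂ)*x*y*z^4*((starRingEnd ℂ)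 y)*((starRingEnd ℂ) z)^3 + (-4:ℂ)*(t:ℂ)^2*z^4*((starRingEnd ℂ) z)^2 + (-4:ℂ)*(t:ℂ)^2*y*z^4*((starRingEnd ℂ) y)*((starRingEnd ℂ) z)^2) * hv + ((2:ℂ)*y^2*z^2 + (2:ℂ)*y^2*z^3*((starRingEnd ℂ) z) + (-1:ℂ)*x*y + (-1:ℂ)*x*y*z*((starRingEnd ℂ) z) + (-1:ℂ)*x*y*z^2*((starRingEnd ℂ) z)^2 + (-1:ℂ)*x*y*z^3*((starRingEnd ℂ) z)^3 + (2:ℂ)*(t:ℂ)*y*z + (2:ℂ)*(t:ℂ)*y*z^2*((starRingEnd ℂ) z) + (-2:ℂ)*(t:ℂ)*y*z^3 + (2:ℂ)*(t:ℂ)*y*z^3*((starRingEnd ℂ) z)^2 + (1:ℂ)*(t:ℂ)*x*z + (1:ℂ)*(t:ℂ)*x*z^2*((starRingEnd ℂ) z) + (1:ℂ)*(t:ℂ)*x*z^3 + (1:ℂ)*(t:ℂ)*x*z^3*((starRingEnd ℂ) z)^2 + (-1:ℂ)*(t:ℂ)*x*y^2*z + (-1:ℂ)*(t:ℂ)*x*y^2*z^2*((starRingEnd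 ℂ) z) + (-1:ℂ)*(t:ℂ)*x*y^2*z^3 + (-1:ℂ)*(t:ℂ)*x*y^2*z^3*((starRingEnd ℂ) z)^2 + (-4:ℂ)*(t:ℂ)^2*z^2 + (-4:ℂ)*(t:ℂ)^2*z^3*((starRingEnd ℂ) z) + (-4:ℂ)*(t:ℂ)^2*y^2*z^2 + (-4:ℂ)*(t:ℂ)^2*y^2*z^3*((starRingEnd ℂ) z)) * hw
  have F2 : ((1:ℂ)*x*y + (-1:ℂ)*x*y*z^4 + (2:ℂ)*x^2*z^2 + (-1:ℂ)*(t:ℂ)*y*z + (1:ℂ)*(t:ℂ)*y*z^3 + (-2:ℂ)*(t:ℂ)*x*z + (-2:ℂ)*(t:ℂ)*x*z^3 + (-1:ℂ)*(t:ℂ)*x^2*y*z + (1:ℂ)*(t:ℂ)*x^2*y*z^3 + (4:ℂ)*(t:ℂ)^2*z^2 + (-4:ℂ)*(t:ℂ)^2*x^2*z^2) = 0 := by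
    linear_combination (x^2*y*z^4) * f2 + ((1:ℂ)*x*y*z^4 + (-1:ℂ)*x*y*z^4*((starRingEnd ℂ) z)^4 + (-1:ℂ)*(t:ℂ)*y*z^4*((starRingEnd ℂ) z) + (1:ℂ)*(t:ℂ)*y*z^4*((starRingEnd ℂ) z)^3 + (2:ℂ)*(t:ℂ)*x*y*z^4*((starRingEnd ℂ) y)*((starRingEnd ℂ) z) + (2:ℂ)*(t:ℂ)*x*y*z^4*((starRingEnd ℂ) y)*((starRingEnd ℂ) z)^3 + (-1:ℂ)*(t:ℂ)*x*y*z^4*((starRingEnd ℂ) x)*((starRingEnd ℂ) z) + (1:ℂ)*(t:ℂ)*x*y*z^4*((starRingEnd ℂ) x)*((starRingEnd ℂ) z)^3 + (-4:ℂ)*(t:ℂ)^2*y*z^4*((starRingEnd ℂ) y)*((starRingEnd ℂ) z)^2 + (-4:ℂ)*(t:ℂ)^2*x*y*z^4*((starRingEnd ℂ) x)*((starRingEnd ℂ) y)*((starRingEnd ℂ) z)^2) * hu + ((-2:ℂ)*x^2*z^4*((starRingEnd ℂ) z)^2 + (2:ℂ)*(t:ℂ)*x*z^4*((starRingEnd ℂ)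 z) + (2:ℂ)*(t:ℂ)*x*z^4*((starRingEnd ℂ) z)^3 + (-4:ℂ)*(t:ℂ)^2*z^4*((starRingEnd ℂ) z)^2 + (4:ℂ)*(t:ℂ)^2*x^2*z^4*((starRingEnd ℂ) z)^2) * hv + ((-1:ℂ)*x*y + (-1:ℂ)*x*y*z*((starRingEnd ℂ) z) + (-1:ℂ)*x*y*z^2*((starRingEnd ℂ) z)^2 + (-1:ℂ)*x*y*z^3*((starRingEnd ℂ) z)^3 + (-2:ℂ)*x^2*z^2 + (-2:ℂ)*x^2*z^3*((starRingEnd ℂ) z) + (1:ℂ)*(t:ℂ)*y*z + (1:ℂ)*(t:ℂ)*y*z^2*((starRingEnd ℂ) z) + (-1:ℂ)*(t:ℂ)*y*z^3 + (1:ℂ)*(t:ℂ)*y*z^3*((starRingEnd ℂ) z)^2 + (2:ℂ)*(t:ℂ)*x*z + (2:ℂ)*(t:ℂ)*x*z^2*((starRingEnd ℂ) z) + (2:ℂ)*(t:ℂ)*x*z^3 + (2:ℂ)*(t:ℂ)*x*z^3*((starRingEnd ℂ) z)^2 + (1:ℂ)*(t:ℂ)*x^2*y*z + (1:ℂ)*(t:ℂ)*x^2*y*z^2*((starRingEnd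 ℂ) z) + (-1:ℂ)*(t:ℂ)*x^2*y*z^3 + (1:ℂ)*(t:ℂ)*x^2*y*z^3*((starRingEnd ℂ) z)^2 + (-4:ℂ)*(t:ℂ)^2*z^2 + (-4:ℂ)*(t:ℂ)^2*z^3*((starRingEnd ℂ) z) + (4:ℂ)*(t:ℂ)^2*x^2*z^2 + (4:ℂ)*(t:ℂ)^2*x^2*z^3*((starRingEnd ℂ) z)) * hw
  have F3 : ((-2:ℂ)*y^2*z^2 + (4:ℂ)*x*y + (2:ℂ)*x^2*z^2 + (-3:ℂ)*(t:ℂ)*y*z + (1:ℂ)*(t:ℂ)*y*z^3 + (-3:ℂ)*(t:ℂ)*x*z + (-1:ℂ)*(t:ℂ)*x*z^3 + (3:ℂ)*(t:ℂ)*x*y^2*z + (1:ℂ)*(t:ℂ)*x*y^2*z^3 + (-3:ℂ)*(t:ℂ)*x^2*y*z + (1:ℂ)*(t:ℂ)*x^2*y*z^3 + (4:ℂ)*(t:ℂ)^2*z^2 + (4:ℂ)*(t:ℂ)^2*y^2*z^2 + (-4:ℂ)*(t:ℂ)^2*x^2*z^2 + (-4:ℂ)*(t:ℂ)^2*x^2*y^2*z^2)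 = 0 := by
    linear_combination (x^2*y^2*z^3) * f3 + ((2:ℂ)*y^2*z^3*((starRingEnd ℂ) z) + (-4:ℂ)*x*y^2*z^3*((starRingEnd ℂ) y)*((starRingEnd ℂ) z)^3 + (2:ℂ)*x*y^2*z^3*((starRingEnd ℂ) x)*((starRingEnd ℂ) z) + (-1:ℂ)*(t:ℂ)*y^2*z^3*((starRingEnd ℂ) y) + (3:ℂ)*(t:ℂ)*y^2*z^3*((starRingEnd ℂ) y)*((starRingEnd ℂ) z)^2 + (-1:ℂ)*(t:ℂ)*x*y^2*z^3 + (-3:ℂ)*(t:ℂ)*x*y^2*z^3*((starRingEnd ℂ) z)^2 + (1:ℂ)*(t:ℂ)*x*y^2*z^3*((starRingEnd ℂ) y)^2 + (3:ℂ)*(t:ℂ)*x*y^2*z^3*((starRingEnd ℂ) y)^2*((starRingEnd ℂ) z)^2 + (-1:ℂ)*(t:ℂ)*x*y^2*z^3*((starRingEnd ℂ) x)*((starRingEnd ℂ) y) + (3:ℂ)*(t:ℂ)*x*y^2*z^3*((starRingEnd ℂ) x)*((starRingEnd ℂ) y)*((starRingEnd ℂ) z)^2 + (-4:ℂ)*(t:ℂ)^2*y^2*z^3*((starRingEnd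 ℂ) z) + (-4:ℂ)*(t:ℂ)^2*y^2*z^3*((starRingEnd ℂ) y)^2*((starRingEnd ℂ) z) + (-4:ℂ)*(t:ℂ)^2*x*y^2*z^3*((starRingEnd ℂ) x)*((starRingEnd ℂ) z) + (-4:ℂ)*(t:ℂ)^2*x*y^2*z^3*((starRingEnd ℂ) x)*((starRingEnd ℂ) y)^2*((starRingEnd ℂ) z)) * hu + ((-4:ℂ)*x*y*z^3*((starRingEnd ℂ) z)^3 + (-2:ℂ)*x^2*z^3*((starRingEnd ℂ) z) + (-2:ℂ)*x^2*y*z^3*((starRingEnd ℂ) y)*((starRingEnd ℂ) z) + (-1:ℂ)*(t:ℂ)*y*z^3 + (3:ℂ)*(t:ℂ)*y*z^3*((starRingEnd ℂ) z)^2 + (1:ℂ)*(t:ℂ)*x*z^3 + (3:ℂ)*(t:ℂ)*x*z^3*((starRingEnd ℂ) z)^2 + (1:ℂ)*(t:ℂ)*x*y*z^3*((starRingEnd ℂ) y) + (3:ℂ)*(t:ℂ)*x*y*z^3*((starRingEnd ℂ) y)*((starRingEnd ℂ) z)^2 + (-1:ℂ)*(t:ℂ)*x^2*y*z^3 + (3:ℂ)*(t:ℂ)*x^2*y*z^3*((starRingEnd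 ℂ) z)^2 + (-4:ℂ)*(t:ℂ)^2*z^3*((starRingEnd ℂ) z) + (-4:ℂ)*(t:ℂ)^2*y*z^3*((starRingEnd ℂ) y)*((starRingEnd ℂ) z) + (4:ℂ)*(t:ℂ)^2*x^2*z^3*((starRingEnd ℂ) z) + (4:ℂ)*(t:ℂ)^2*x^2*y*z^3*((starRingEnd ℂ) y)*((starRingEnd ℂ) z)) * hv + ((2:ℂ)*y^2*z^2 + (-4:ℂ)*x*y + (-4:ℂ)*x*y*z*((starRingEnd ℂ) z) + (-4:ℂ)*x*y*z^2*((starRingEnd ℂ) z)^2 + (-2:ℂ)*x^2*z^2 + (3:ℂ)*(t:ℂ)*y*z + (3:ℂ)*(t:ℂ)*y*z^2*((starRingEnd ℂ) z) + (3:ℂ)*(t:ℂ)*x*z + (3:ℂ)*(t:ℂ)*x*z^2*((starRingEnd ℂ) z) + (-3:ℂ)*(t:ℂ)*x*y^2*z + (-3:ℂ)*(t:ℂ)*x*y^2*z^2*((starRingEnd ℂ) z) + (3:ℂ)*(t:ℂ)*x^2*y*z + (3:ℂ)*(t:ℂ)*x^2*y*z^2*((starRingEnd ℂ) z) + (-4:ℂ)*(t:ℂ)^2*z^2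 + (-4:ℂ)*(t:ℂ)^2*y^2*z^2 + (4:ℂ)*(t:ℂ)^2*x^2*z^2 + (4:ℂ)*(t:ℂ)^2*x^2*y^2*z^2) * hw
  have key : ((-15/64:ℂ)*(t:ℂ)^3*z + (-3/64:ℂ)*(t:ℂ)^3*z^5 + (7/8:ℂ)*(t:ℂ)^5*z + (1:ℂ)*(t:ℂ)^7*z^5) = 0 := by
    linear_combination ((1/16:ℂ)*y + (1/16:ℂ)*y*z^2 + (-1595/4608:ℂ)*y^3 + (-6439/4608:ℂ)*y^3*z^2 + (-1/16:ℂ)*x + (1/16:ℂ)*x*z^2 + (-5/9:ℂ)*x*y^2 + (-819/512:ℂ)*x*y^2*z^2 + (457/288:ℂ)*x^2*y + (-815/384:ℂ)*x^2*y*z^2 + (-5159/4608:ℂ)*x^3 + (-229/512:ℂ)*x^3*z^2 + (9/32:ℂ)*(t:ℂ)*z^3 + (6037/1536:ℂ)*(t:ℂ)*y^2*z + (-2437/4608:ℂ)*(t:ℂ)*y^2*z^3 + (47869/9216:ℂ)*(t:ℂ)*x*y*z + (17671/9216:ℂ)*(t:ℂ)*x*y*z^3 + (-431/1536:ℂ)*(t:ℂ)*x*y^3*z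 + (-943/1536:ℂ)*(t:ℂ)*x*y^3*z^3 + (33109/9216:ℂ)*(t:ℂ)*x^2*z + (2465/9216:ℂ)*(t:ℂ)*x^2*z^3 + (44023/9216:ℂ)*(t:ℂ)*x^2*y^2*z + (1595/9216:ℂ)*(t:ℂ)*x^2*y^2*z^3 + (-28007/9216:ℂ)*(t:ℂ)*x^3*y*z + (4063/9216:ℂ)*(t:ℂ)*x^3*y*z^3 + (1247/1152:ℂ)*(t:ℂ)^2*y + (-2017/576:ℂ)*(t:ℂ)^2*y*z^2 + (33/32:ℂ)*(t:ℂ)^2*y^3 + (523/288:ℂ)*(t:ℂ)^2*y^3*z^2 + (-133/576:ℂ)*(t:ℂ)^2*x + (-1777/1152:ℂ)*(t:ℂ)^2*x*z^2 + (-1933/192:ℂ)*(t:ℂ)^2*x*y^2 + (1927/1152:ℂ)*(t:ℂ)^2*x*y^2*z^2 + (-6427/2304:ℂ)*(t:ℂ)^2*x^2*y + (4541/768:ℂ)*(t:ℂ)^2*x^2*y*z^2 + (7673/1152:ℂ)*(t:ℂ)^2*x^2*y^3*z^2 + (285/128:ℂ)*(t:ℂ)^2*x^3 + (859/1152:ℂ)*(t:ℂ)^2*x^3*z^2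 + (-10561/2304:ℂ)*(t:ℂ)^2*x^3*y^2*z^2 + (-173/96:ℂ)*(t:ℂ)^3*z + (-21221/2304:ℂ)*(t:ℂ)^3*y^2*z + (2555/256:ℂ)*(t:ℂ)^3*y^2*z^3 + (-113059/4608:ℂ)*(t:ℂ)^3*x*y*z + (1575/512:ℂ)*(t:ℂ)^3*x*y*z^3 + (-1505/256:ℂ)*(t:ℂ)^3*x*y^3*z + (-335/768:ℂ)*(t:ℂ)^3*x*y^3*z^3 + (-31435/4608:ℂ)*(t:ℂ)^3*x^2*z + (1403/1536:ℂ)*(t:ℂ)^3*x^2*z^3 + (10669/1536:ℂ)*(t:ℂ)^3*x^2*y^2*z + (841/1536:ℂ)*(t:ℂ)^3*x^2*y^2*z^3 + (7913/4608:ℂ)*(t:ℂ)^3*x^3*y*z + (-57/512:ℂ)*(t:ℂ)^3*x^3*y*z^3 + (2687/384:ℂ)*(t:ℂ)^4*y + (1509/128:ℂ)*(t:ℂ)^4*y*z^2 + (67/24:ℂ)*(t:ℂ)^4*y^3*z^2 + (-403/48:ℂ)*(t:ℂ)^4*x + (35/32:ℂ)*(t:ℂ)^4*x*z^2 + (-93/128:ℂ)*(t:ℂ)^4*x*y^2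 + (-1189/64:ℂ)*(t:ℂ)^4*x*y^2*z^2 + (1669/384:ℂ)*(t:ℂ)^4*x^2*y + (6107/384:ℂ)*(t:ℂ)^4*x^2*y*z^2 + (449/64:ℂ)*(t:ℂ)^4*x^2*y^3*z^2 + (27/8:ℂ)*(t:ℂ)^4*x^3 + (-281/96:ℂ)*(t:ℂ)^4*x^3*z^2 + (-57/128:ℂ)*(t:ℂ)^4*x^3*y^2*z^2 + (7/16:ℂ)*(t:ℂ)^5*z + (-11/8:ℂ)*(t:ℂ)^5*z^3 + (481/192:ℂ)*(t:ℂ)^5*y^2*z + (-35/64:ℂ)*(t:ℂ)^5*y^2*z^3 + (1597/192:ℂ)*(t:ℂ)^5*x*y*z + (-19/64:ℂ)*(t:ℂ)^5*x*y*z^3 + (7/64:ℂ)*(t:ℂ)^5*x*y^3*z + (-3/64:ℂ)*(t:ℂ)^5*x*y^3*z^3 + (301/48:ℂ)*(t:ℂ)^5*x^2*z + (-3/8:ℂ)*(t:ℂ)^5*x^2*z^3 + (233/64:ℂ)*(t:ℂ)^5*x^2*y^2*z + (-1/64:ℂ)*(t:ℂ)^5*x^2*y^2*z^3 + (1349/96:ℂ)*(t:ℂ)^5*x^3*y*z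 + (1/16:ℂ)*(t:ℂ)^5*x^3*y*z^3 + (-9/4:ℂ)*(t:ℂ)^6*y*z^2 + (-5/16:ℂ)*(t:ℂ)^6*y^3*z^2 + (-23/16:ℂ)*(t:ℂ)^6*x*z^2 + (-2:ℂ)*(t:ℂ)^6*x*y^2*z^2 + (11/8:ℂ)*(t:ℂ)^6*x^2*y*z^2 + (-7/16:ℂ)*(t:ℂ)^6*x^2*y^3*z^2 + (-1/4:ℂ)*(t:ℂ)^6*x^3*z^2 + (1/4:ℂ)*(t:ℂ)^6*x^3*y^2*z^2) * hH + ((-1/32:ℂ)*x*y + (-1/32:ℂ)*x*y*z^2 + (1595/9216:ℂ)*x*y^3 + (-12097/9216:ℂ)*x*y^3*z^2 + (1/32:ℂ)*x^2 + (-1/32:ℂ)*x^2*z^2 + (20597/9216:ℂ)*x^2*y^2 + (2189/4608:ℂ)*x^2*y^2*z^2 + (-1595/3072:ℂ)*x^3*y + (4553/3072:ℂ)*x^3*y*z^2 + (17/64:ℂ)*(t:ℂ)*y*z + (85/1152:ℂ)*(t:ℂ)*y^3*z + (-9/64:ℂ)*(t:ℂ)*x*z^3 + (-5155/1536:ℂ)*(t:ℂ)*x*y^2*z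 + (-13/2304:ℂ)*(t:ℂ)*x*y^2*z^3 + (-10147/4608:ℂ)*(t:ℂ)*x^2*y*z + (-3185/4608:ℂ)*(t:ℂ)*x^2*y*z^3 + (7673/4608:ℂ)*(t:ℂ)*x^2*y^3*z + (943/1536:ℂ)*(t:ℂ)*x^2*y^3*z^3 + (-3707/9216:ℂ)*(t:ℂ)*x^3*z + (315/1024:ℂ)*(t:ℂ)*x^3*z^3 + (-5647/3072:ℂ)*(t:ℂ)*x^3*y^2*z + (2435/9216:ℂ)*(t:ℂ)*x^3*y^2*z^3 + (15/128:ℂ)*(t:ℂ)^2 + (3/128:ℂ)*(t:ℂ)^2*z^2 + (85/2304:ℂ)*(t:ℂ)^2*y^2 + (13/2304:ℂ)*(t:ℂ)^2*y^2*z^2 + (743/3072:ℂ)*(t:ℂ)^2*x*y + (21305/9216:ℂ)*(t:ℂ)^2*x*y*z^2 + (-1273/2304:ℂ)*(t:ℂ)^2*x*y^3 + (3661/2304:ℂ)*(t:ℂ)^2*x*y^3*z^2 + (405/1024:ℂ)*(t:ℂ)^2*x^2 + (8341/9216:ℂ)*(t:ℂ)^2*x^2*z^2 + (45317/9216:ℂ)*(t:ℂ)^2*x^2*y^2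 + (22451/9216:ℂ)*(t:ℂ)^2*x^2*y^2*z^2 + (8909/9216:ℂ)*(t:ℂ)^2*x^3*y + (-15299/9216:ℂ)*(t:ℂ)^2*x^3*y*z^2 + (-5251/2304:ℂ)*(t:ℂ)^2*x^3*y^3*z^2 + (-517/288:ℂ)*(t:ℂ)^3*y*z + (-5513/1152:ℂ)*(t:ℂ)^3*y^3*z + (-5941/2304:ℂ)*(t:ℂ)^3*x*z + (31/96:ℂ)*(t:ℂ)^3*x*z^3 + (-191/128:ℂ)*(t:ℂ)^3*x*y^2*z + (-1927/256:ℂ)*(t:ℂ)^3*x*y^2*z^3 + (28429/2304:ℂ)*(t:ℂ)^3*x^2*y*z + (-2357/768:ℂ)*(t:ℂ)^3*x^2*y*z^3 + (4381/2304:ℂ)*(t:ℂ)^3*x^2*y^3*z + (335/768:ℂ)*(t:ℂ)^3*x^2*y^3*z^3 + (15551/4608:ℂ)*(t:ℂ)^3*x^3*z + (633/512:ℂ)*(t:ℂ)^3*x^3*z^3 + (-1991/512:ℂ)*(t:ℂ)^3*x^3*y^2*z + (171/512:ℂ)*(t:ℂ)^3*x^3*y^2*z^3 + (-7/16:ℂ)*(t:ℂ)^4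 + (-31/96:ℂ)*(t:ℂ)^4*z^2 + (-1781/768:ℂ)*(t:ℂ)^4*y^2 + (1927/256:ℂ)*(t:ℂ)^4*y^2*z^2 + (-1689/256:ℂ)*(t:ℂ)^4*x*y + (-1813/768:ℂ)*(t:ℂ)^4*x*y*z^2 + (1781/768:ℂ)*(t:ℂ)^4*x*y^3 + (7049/768:ℂ)*(t:ℂ)^4*x*y^3*z^2 + (219/256:ℂ)*(t:ℂ)^4*x^2 + (-189/64:ℂ)*(t:ℂ)^4*x^2*z^2 + (-1237/768:ℂ)*(t:ℂ)^4*x^2*y^2 + (963/128:ℂ)*(t:ℂ)^4*x^2*y^2*z^2 + (-391/192:ℂ)*(t:ℂ)^4*x^3*y + (-607/96:ℂ)*(t:ℂ)^4*x^3*y*z^2 + (-841/384:ℂ)*(t:ℂ)^4*x^3*y^3*z^2 + (2713/192:ℂ)*(t:ℂ)^5*y*z + (1781/192:ℂ)*(t:ℂ)^5*y^3*z + (587/192:ℂ)*(t:ℂ)^5*x*z + (17/32:ℂ)*(t:ℂ)^5*x*z^3 + (7/4:ℂ)*(t:ℂ)^5*x*y^2*z + (1/4:ℂ)*(t:ℂ)^5*x*y^2*z^3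 + (-4769/192:ℂ)*(t:ℂ)^5*x^2*y*z + (15/64:ℂ)*(t:ℂ)^5*x^2*y*z^3 + (-901/96:ℂ)*(t:ℂ)^5*x^2*y^3*z + (3/64:ℂ)*(t:ℂ)^5*x^2*y^3*z^3 + (-599/192:ℂ)*(t:ℂ)^5*x^3*z + (7/32:ℂ)*(t:ℂ)^5*x^3*z^3 + (-7/4:ℂ)*(t:ℂ)^5*x^3*y^2*z + (-3/16:ℂ)*(t:ℂ)^5*x^3*y^2*z^3 + (-11/32:ℂ)*(t:ℂ)^6*z^2 + (-1/4:ℂ)*(t:ℂ)^6*y^2*z^2 + (13/16:ℂ)*(t:ℂ)^6*x*y*z^2 + (-1/16:ℂ)*(t:ℂ)^6*x*y^3*z^2 + (1/4:ℂ)*(t:ℂ)^6*x^2*z^2 + (1/4:ℂ)*(t:ℂ)^6*x^2*y^2*z^2 + (-13/16:ℂ)*(t:ℂ)^6*x^3*y*z^2 + (1/16:ℂ)*(t:ℂ)^6*x^3*y^3*z^2) * e1 + ((-1/32:ℂ)*y^2 + (-1/32:ℂ)*y^2*z^2 + (1/32:ℂ)*x*y + (-1/32:ℂ)*x*y*z^2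 + (-5159/3072:ℂ)*x*y^3 + (265/1152:ℂ)*x*y^3*z^2 + (-9839/9216:ℂ)*x^2*y^2 + (-19855/9216:ℂ)*x^2*y^2*z^2 + (5159/9216:ℂ)*x^3*y + (-1531/2304:ℂ)*x^3*y*z^2 + (-9/64:ℂ)*(t:ℂ)*y*z^3 + (-4313/2304:ℂ)*(t:ℂ)*y^3*z + (821/1536:ℂ)*(t:ℂ)*y^3*z^3 + (-17/64:ℂ)*(t:ℂ)*x*z + (-5887/9216:ℂ)*(t:ℂ)*x*y^2*z + (-3767/3072:ℂ)*(t:ℂ)*x*y^2*z^3 + (-409/512:ℂ)*(t:ℂ)*x^2*y*z + (-1325/2304:ℂ)*(t:ℂ)*x^2*y*z^3 + (1153/1536:ℂ)*(t:ℂ)*x^2*y^3*z + (-2015/4608:ℂ)*(t:ℂ)*x^2*y^3*z^3 + (509/1152:ℂ)*(t:ℂ)*x^3*z + (18503/9216:ℂ)*(t:ℂ)*x^3*y^2*z + (-4063/9216:ℂ)*(t:ℂ)*x^3*y^2*z^3 + (15/128:ℂ)*(t:ℂ)^2 + (-3/128:ℂ)*(t:ℂ)^2*z^2 + (-4315/3072:ℂ)*(t:ℂ)^2*y^2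 + (35059/9216:ℂ)*(t:ℂ)^2*y^2*z^2 + (-2473/9216:ℂ)*(t:ℂ)^2*x*y + (-5465/9216:ℂ)*(t:ℂ)^2*x*y*z^2 + (47807/9216:ℂ)*(t:ℂ)^2*x*y^3 + (-6379/9216:ℂ)*(t:ℂ)^2*x*y^3*z^2 + (-509/2304:ℂ)*(t:ℂ)^2*x^2 + (-1325/2304:ℂ)*(t:ℂ)^2*x^2*z^2 + (18835/9216:ℂ)*(t:ℂ)^2*x^2*y^2 + (8575/9216:ℂ)*(t:ℂ)^2*x^2*y^2*z^2 + (-1537/1152:ℂ)*(t:ℂ)^2*x^3*y + (779/384:ℂ)*(t:ℂ)^2*x^3*y*z^2 + (-3971/4608:ℂ)*(t:ℂ)^2*x^3*y^3 + (457/288:ℂ)*(t:ℂ)^2*x^3*y^3*z^2 + (11809/2304:ℂ)*(t:ℂ)^3*y*z + (-31/96:ℂ)*(t:ℂ)^3*y*z^3 + (9409/2304:ℂ)*(t:ℂ)^3*y^3*z + (-157/64:ℂ)*(t:ℂ)^3*y^3*z^3 + (135/64:ℂ)*(t:ℂ)^3*x*z + (10403/1536:ℂ)*(t:ℂ)^3*x*y^2*z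 + (-11/1536:ℂ)*(t:ℂ)^3*x*y^2*z^3 + (-55/64:ℂ)*(t:ℂ)^3*x^2*y*z + (-1651/768:ℂ)*(t:ℂ)^3*x^2*y*z^3 + (-677/768:ℂ)*(t:ℂ)^3*x^2*y^3*z^3 + (3011/1152:ℂ)*(t:ℂ)^3*x^3*z + (-3841/4608:ℂ)*(t:ℂ)^3*x^3*y^2*z + (57/512:ℂ)*(t:ℂ)^3*x^3*y^2*z^3 + (-7/16:ℂ)*(t:ℂ)^4 + (-31/96:ℂ)*(t:ℂ)^4*z^2 + (-73/32:ℂ)*(t:ℂ)^4*y^2 + (-721/192:ℂ)*(t:ℂ)^4*y^2*z^2 + (257/48:ℂ)*(t:ℂ)^4*x*y + (673/768:ℂ)*(t:ℂ)^4*x*y*z^2 + (7/384:ℂ)*(t:ℂ)^4*x*y^3 + (3863/768:ℂ)*(t:ℂ)^4*x*y^3*z^2 + (-1343/768:ℂ)*(t:ℂ)^4*x^2 + (-1651/768:ℂ)*(t:ℂ)^4*x^2*z^2 + (-431/768:ℂ)*(t:ℂ)^4*x^2*y^2 + (-619/768:ℂ)*(t:ℂ)^4*x^2*y^2*z^2 +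 (-2639/768:ℂ)*(t:ℂ)^4*x^3*y + (1343/384:ℂ)*(t:ℂ)^4*x^3*y*z^2 + (47/768:ℂ)*(t:ℂ)^4*x^3*y^3 + (-139/96:ℂ)*(t:ℂ)^5*y*z + (27/32:ℂ)*(t:ℂ)^5*y*z^3 + (-209/192:ℂ)*(t:ℂ)^5*y^3*z + (19/64:ℂ)*(t:ℂ)^5*y^3*z^3 + (-1/16:ℂ)*(t:ℂ)^5*x*z + (1/4:ℂ)*(t:ℂ)^5*x*y^2*z + (1/16:ℂ)*(t:ℂ)^5*x*y^2*z^3 + (-9/64:ℂ)*(t:ℂ)^5*x^2*y*z + (5/32:ℂ)*(t:ℂ)^5*x^2*y*z^3 + (13/64:ℂ)*(t:ℂ)^5*x^2*y^3*z^3 + (-1343/192:ℂ)*(t:ℂ)^5*x^3*z + (-1355/192:ℂ)*(t:ℂ)^5*x^3*y^2*z + (-1/16:ℂ)*(t:ℂ)^5*x^3*y^2*z^3 + (21/32:ℂ)*(t:ℂ)^6*z^2 + (21/32:ℂ)*(t:ℂ)^6*y^2*z^2 + (1/4:ℂ)*(t:ℂ)^6*x*y*z^2 + (1/4:ℂ)*(t:ℂ)^6*x*y^3*z^2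 + (5/32:ℂ)*(t:ℂ)^6*x^2*z^2 + (5/32:ℂ)*(t:ℂ)^6*x^2*y^2*z^2) * e2 + ((1595/9216:ℂ)*y^3*z + (6439/9216:ℂ)*y^3*z^3 + (5159/9216:ℂ)*x*y^2*z + (229/1024:ℂ)*x*y^2*z^3 + (1595/9216:ℂ)*x^2*y*z + (6439/9216:ℂ)*x^2*y*z^3 + (5159/9216:ℂ)*x^3*z + (229/1024:ℂ)*x^3*z^3 + (15/128:ℂ)*(t:ℂ) + (85/2304:ℂ)*(t:ℂ)*y^2 + (2173/4608:ℂ)*(t:ℂ)*y^2*z^2 + (-2189/2304:ℂ)*(t:ℂ)*x*y*z^2 + (-1595/2304:ℂ)*(t:ℂ)*x*y^3*z^2 + (-509/2304:ℂ)*(t:ℂ)*x^2 + (-3859/4608:ℂ)*(t:ℂ)*x^2*z^2 + (-377/288:ℂ)*(t:ℂ)*x^2*y^2*z^2 + (33/64:ℂ)*(t:ℂ)*x^3*y*z^2 + (101/1024:ℂ)*(t:ℂ)^2*y*z + (-3793/9216:ℂ)*(t:ℂ)^2*y*z^3 + (-1103/2304:ℂ)*(t:ℂ)^2*y^3*z +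 (-223/256:ℂ)*(t:ℂ)^2*y^3*z^3 + (-1649/9216:ℂ)*(t:ℂ)^2*x*z + (-431/3072:ℂ)*(t:ℂ)^2*x*z^3 + (-19975/9216:ℂ)*(t:ℂ)^2*x*y^2*z + (-3773/3072:ℂ)*(t:ℂ)^2*x*y^2*z^3 + (-7481/9216:ℂ)*(t:ℂ)^2*x^2*y*z + (-1763/1024:ℂ)*(t:ℂ)^2*x^2*y*z^3 + (-1211/1152:ℂ)*(t:ℂ)^2*x^2*y^3*z^3 + (-257/288:ℂ)*(t:ℂ)^2*x^3*z + (-19/32:ℂ)*(t:ℂ)^2*x^3*z^3 + (3971/4608:ℂ)*(t:ℂ)^2*x^3*y^2*z + (361/512:ℂ)*(t:ℂ)^2*x^3*y^2*z^3 + (-7/16:ℂ)*(t:ℂ)^3 + (71/96:ℂ)*(t:ℂ)^3*z^2 + (-1781/768:ℂ)*(t:ℂ)^3*y^2 + (71/96:ℂ)*(t:ℂ)^3*y^2*z^2 + (2053/1152:ℂ)*(t:ℂ)^3*x*y*z^2 + (1103/576:ℂ)*(t:ℂ)^3*x*y^3*z^2 + (-1343/768:ℂ)*(t:ℂ)^3*x^2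 + (69/256:ℂ)*(t:ℂ)^4*y*z + (-1033/768:ℂ)*(t:ℂ)^4*y*z^3 + (-1781/768:ℂ)*(t:ℂ)^4*y^3*z + (-951/256:ℂ)*(t:ℂ)^4*y^3*z^3 + (1697/384:ℂ)*(t:ℂ)^4*x*z + (1/64:ℂ)*(t:ℂ)^4*x*z^3 + (887/192:ℂ)*(t:ℂ)^4*x*y^2*z + (-59/128:ℂ)*(t:ℂ)^4*x*y^2*z^3 + (-241/96:ℂ)*(t:ℂ)^4*x^2*y*z + (-119/32:ℂ)*(t:ℂ)^4*x^2*y*z^3 + (-253/192:ℂ)*(t:ℂ)^4*x^2*y^3*z^3 + (47/768:ℂ)*(t:ℂ)^4*x^3*z + (-73/256:ℂ)*(t:ℂ)^4*x^3*z^3 + (-47/768:ℂ)*(t:ℂ)^4*x^3*y^2*z + (57/256:ℂ)*(t:ℂ)^4*x^3*y^2*z^3 + (-9/64:ℂ)*(t:ℂ)^5*z^2 + (-9/64:ℂ)*(t:ℂ)^5*y^2*z^2 + (1745/192:ℂ)*(t:ℂ)^5*x*y*z^2 + (1781/192:ℂ)*(t:ℂ)^5*x*y^3*z^2 + (15/32:ℂ)*(t:ℂ)^6*y*z^3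 + (5/32:ℂ)*(t:ℂ)^6*y^3*z^3 + (3/8:ℂ)*(t:ℂ)^6*x*z^3 + (1/2:ℂ)*(t:ℂ)^6*x*y^2*z^3 + (-1/32:ℂ)*(t:ℂ)^6*x^2*y*z^3 + (5/32:ℂ)*(t:ℂ)^6*x^2*y^3*z^3 + (1/8:ℂ)*(t:ℂ)^6*x^3*z^3 + (-1/8:ℂ)*(t:ℂ)^6*x^3*y^2*z^3) * e3 +
      ((-5159/9216:ℂ)*x^3 + (-1001/4608:ℂ)*x^3*z^2 + (1001/2304:ℂ)*(t:ℂ)*x^3*y*z + (285/256:ℂ)*(t:ℂ)^2*x^3 + (409/768:ℂ)*(t:ℂ)^2*x^3*z^2 + (-3971/4608:ℂ)*(t:ℂ)^2*x^3*y^2 + (-1601/576:ℂ)*(t:ℂ)^3*x^3*y*z + (27/16:ℂ)*(t:ℂ)^4*x^3 + (-491/256:ℂ)*(t:ℂ)^4*x^3*z^2 + (47/768:ℂ)*(t:ℂ)^4*x^3*y^2 + (2263/192:ℂ)*(t:ℂ)^5*x^3*y*z + (3/32:ℂ)*(t:ℂ)^6*x^3*z^2) * F1 + ((-1595/9216:ℂ)*y^3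 + (781/9216:ℂ)*y^3*z^2 + (-187/2304:ℂ)*(t:ℂ)*x*y^3*z + (33/64:ℂ)*(t:ℂ)^2*y^3) * F2 + ((15/128:ℂ)*(t:ℂ)*z^3 + (-3/16:ℂ)*(t:ℂ)^5*z^3) * F3
  -- extract real relation
  have key2 : ((64*t^4 - 3 : ℝ) : ℂ) * z^4 = ((15 - 56*t^2 : ℝ) : ℂ) := by
    have h64 : (t:ℂ)^3 * z * (((64*t^4 - 3 : ℝ) : ℂ) * z^4 - ((15 - 56*t^2 : ℝ) : ℂ)) = 0 := by
      push_cast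
      linear_combination (64:ℂ) * key
    rcases mul_eq_zero.mp h64 with h | h
    · rcases mul_eq_zero.mp h with h' | h'
      · exact absurd h' (pow_ne_zero 3 htC)
      · exact absurd h' hz0
    · exact sub_eq_zero.mp h
  have habs : |64*t^4 - 3| = |15 - 56*t^2| := by
    have h := congrArg norm key2
    rwa [norm_mul, norm_pow, hz, one_pow, mul_one, Complex.norm_real, Complex.norm_real,
      Real.norm_eq_abs, Real.norm_eq_abs] at h
  have ht3 : t^2 < 1/3 := by
    have h1 : 0 < Real.sqrt 3 := by positivity
    have h2 : t * Real.sqrt 3 < 1 := by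
      calc t * Real.sqrt 3 < (1 / Real.sqrt 3) * Real.sqrt 3 := by
            exact mul_lt_mul_of_pos_right ht1 h1
        _ = 1 := by field_simp
    nlinarith [Real.sq_sqrt (show (0:ℝ) ≤ 3 by norm_num), mul_pos ht0 h1]
  rcases abs_eq_abs.mp habs with h | h
  · have hfac : (2*t - 1) * ((2*t + 1) * (16*t^2 + 18)) = 0 := by linear_combination h
    rcases mul_eq_zero.mp hfac with h' | h'
    · exact ht2 (by linarith)
    · rcases mul_eq_zero.mp h' with h'' | h'' <;> nlinarith
  · nlinarith [mul_pos (show (0:ℝ) < 1 - 2*t^2 by nlinarith) (show (0:ℝ) < 3 - 8*t^2 by nlinarith)]
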